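/- For every finite simple graph G, max{λ(G), λ(Ḡ)} ≤ λ_g(G) ≤ min{λ(G)+1, λ(Ḡ)+1}. -/
import Mathlib


open SimpleGraph

/-- `S` is a dominating set of `G`: every vertex outside `S` has a neighbor in `S`. -/
def isDomSet {α : Type*} (G : SimpleGraph α) (S : Set α) : Prop :=
  ∀ v ∉ S, ∃ u ∈ S, G.Adj v u

/-- `S` is a locating-dominating set (LD-set) of `G`. -/
def isLDSet {α : Type*} (G : SimpleGraph α) (S : Set α) : Prop :=
  isDomSet G S ∧ ∀ u ∉ S, ∀ v ∉ S, u ≠ v →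
    G.neighborSet u ∩ S ≠ G.neighborSet v ∩ S

/-- The location-domination number `λ(G)`. -/
noncomputable def ldNum {α : Type*} (G : SimpleGraph α) : ℕ :=
  sInf {n | ∃ S : Set α, isLDSet G S ∧ S.ncard = n}

/-- The global location-domination number `λ_g(G)`. -/
noncomputable def gldNum {α : Type*} (G : SimpleGraph α) : ℕ :=
  sInf {n | ∃ S : Set α, isLDSet G S ∧ isLDSet Gᶜ S ∧ S.ncard = n}

/-- `G` is bipartite with stable sets `U` and `W`. -/
def bipartiteWith {α : Type*} (G : SimpleGraph α) (U W : Set α) : Prop :=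
  U ∪ W = Set.univ ∧ Disjoint U W ∧
    ∀ ⦃u v : α⦄, G.Adj u v → (u ∈ U ∧ v ∈ W) ∨ (u ∈ W ∧ v ∈ U)

lemma univ_ld {α : Type*} (G : SimpleGraph α) : isLDSet G Set.univ :=
  ⟨fun v hv => absurd (Set.mem_univ v) hv, fun u hu => absurd (Set.mem_univ u) hu⟩

lemma compl_nbhd_inter {α : Type*} (G : SimpleGraph α) (S : Set α) (u : α) (hu : u ∉ S) :
    Gᶜ.neighborSet u ∩ S = S \ (G.neighborSet u ∩ S) := by
  ext x
  simp only [Set.mem_inter_iff, mem_neighborSet, compl_adj, Set.mem_diff]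
  constructor
  · rintro ⟨⟨hne, hna⟩, hxS⟩; exact ⟨hxS, fun h => hna h.1⟩
  · rintro ⟨hxS, h⟩; exact ⟨⟨fun heq => hu (heq ▸ hxS), fun ha => h ⟨ha, hxS⟩⟩, hxS⟩

lemma diff_ne_of_ne {α : Type*} {A B S : Set α} (hA : A ⊆ S) (hB : B ⊆ S) (h : A ≠ B) :
    S \ A ≠ S \ B := fun he =>
  h (by rw [← Set.diff_diff_cancel_left hA, he, Set.diff_diff_cancel_left hB])

lemma global_of_ld {V : Type*} (G : SimpleGraph V) (S : Set V) (hS : isLDSet G S) :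
    ∃ T : Set V, isLDSet G T ∧ isLDSet Gᶜ T ∧ T.ncard ≤ S.ncard + 1 := by
  obtain ⟨hdom, hloc⟩ := hS
  -- location in Gᶜ relative to S always holds:
  have hlocC : ∀ u ∉ S, ∀ v ∉ S, u ≠ v →
      Gᶜ.neighborSet u ∩ S ≠ Gᶜ.neighborSet v ∩ S := by
    intro u hu v hv huv
    rw [compl_nbhd_inter G S u hu, compl_nbhd_inter G S v hv]
    exact diff_ne_of_ne Set.inter_subset_right Set.inter_subset_right (hloc u hu v hv huv)
  by_cases hw : ∃ w ∉ S, G.neighborSet w ∩ S = S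
  · obtain ⟨w, hwS, hwN⟩ := hw
    refine ⟨insert w S, ⟨?_, ?_⟩, ⟨?_, ?_⟩, (Set.ncard_insert_le w S).trans (le_refl _)⟩
    · intro v hv
      obtain ⟨u, huS, hadj⟩ := hdom v (fun h => hv (Set.mem_insert_of_mem _ h))
      exact ⟨u, Set.mem_insert_of_mem _ huS, hadj⟩
    · intro u hu v hv huv heq
      have hu' : u ∉ S := fun h => hu (Set.mem_insert_of_mem _ h)
      have hv' : v ∉ S := fun h => hv (Set.mem_insert_of_mem _ h)
      refine hloc u hu' v hv' huv ?_
      have key : ∀ X : Set V, (X ∩ insert w S) ∩ S = X ∩ S := by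
        intro X; ext x; simp only [Set.mem_inter_iff, Set.mem_insert_iff]; tauto
      rw [← key (G.neighborSet u), heq, key (G.neighborSet v)]
    · -- domination of Gᶜ by insert w S
      intro v hv
      have hv' : v ∉ S := fun h => hv (Set.mem_insert_of_mem _ h)
      have hvw : v ≠ w := fun h => hv (h ▸ Set.mem_insert w S)
      have hne : G.neighborSet v ∩ S ≠ S := fun h => hloc v hv' w hwS hvw (h.trans hwN.symm)
      have : ∃ s ∈ S, s ∉ G.neighborSet v := by
        by_contra hc
        push_neg at hc
        exact hne (by
          ext x; simp only [Set.mem_inter_iff]; exact ⟨fun h => h.2, fun h => ⟨hc x h, h⟩⟩)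
      obtain ⟨s, hsS, hsN⟩ := this
      exact ⟨s, Set.mem_insert_of_mem _ hsS,
        ⟨fun h => hv' (h ▸ hsS), fun ha => hsN ha⟩⟩
    · intro u hu v hv huv heq
      have hu' : u ∉ S := fun h => hu (Set.mem_insert_of_mem _ h)
      have hv' : v ∉ S := fun h => hv (Set.mem_insert_of_mem _ h)
      refine hlocC u hu' v hv' huv ?_
      have key : ∀ X : Set V, (X ∩ insert w S) ∩ S = X ∩ S := by
        intro X; ext x; simp only [Set.mem_inter_iff, Set.mem_insert_iff]; tauto
      rw [← key (Gᶜ.neighborSet u), heq, key (Gᶜ.neighborSet v)]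
  · push_neg at hw
    refine ⟨S, ⟨hdom, hloc⟩, ⟨?_, hlocC⟩, Nat.le_succ _⟩
    intro v hv
    have hne : G.neighborSet v ∩ S ≠ S := hw v hv
    have : ∃ s ∈ S, s ∉ G.neighborSet v := by
      by_contra hc
      push_neg at hc
      exact hne (by ext x; simp only [Set.mem_inter_iff]; exact ⟨fun h => h.2, fun h => ⟨hc x h, h⟩⟩)
    obtain ⟨s, hsS, hsN⟩ := this
    exact ⟨s, hsS, ⟨fun h => hv (h ▸ hsS), fun ha => hsN ha⟩⟩

lemma gld_le_ld {V : Type*} (G : SimpleGraph V) : gldNum G ≤ ldNum G + 1 := by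
  have hne : {n | ∃ S : Set V, isLDSet G S ∧ S.ncard = n}.Nonempty :=
    ⟨(Set.univ : Set V).ncard, Set.univ, univ_ld G, rfl⟩
  obtain ⟨S, hS, hcard⟩ := Nat.sInf_mem hne
  obtain ⟨T, hT1, hT2, hTcard⟩ := global_of_ld G S hS
  calc gldNum G ≤ T.ncard := Nat.sInf_le ⟨T, hT1, hT2, rfl⟩
    _ ≤ S.ncard + 1 := hTcard
    _ = ldNum G + 1 := by rw [hcard]; rfl

lemma gld_compl {V : Type*} (G : SimpleGraph V) : gldNum Gᶜ = gldNum G := by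
  unfold gldNum
  rw [compl_compl]
  congr 1
  ext n
  exact ⟨fun ⟨S, a, b, c⟩ => ⟨S, b, a, c⟩, fun ⟨S, a, b, c⟩ => ⟨S, b, a, c⟩⟩

theorem stmt5 {V : Type*} [Fintype V] (G : SimpleGraph V) :
    max (ldNum G) (ldNum Gᶜ) ≤ gldNum G ∧
    gldNum G ≤ min (ldNum G + 1) (ldNum Gᶜ + 1) := by
  constructor
  · have hne : {n | ∃ S : Set V, isLDSet G S ∧ isLDSet Gᶜ S ∧ S.ncard = n}.Nonempty :=
      ⟨(Set.univ : Set V).ncard, Set.univ, univ_ld G, univ_ld Gᶜ, rfl⟩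
    obtain ⟨S, h1, h2, hcard⟩ := Nat.sInf_mem hne
    refine max_le ?_ ?_
    · calc ldNum G ≤ S.ncard := Nat.sInf_le ⟨S, h1, rfl⟩
        _ = gldNum G := hcard
    · calc ldNum Gᶜ ≤ S.ncard := Nat.sInf_le ⟨S, h2, rfl⟩
        _ = gldNum G := hcard
  · refine le_min (gld_le_ld G) ?_
    rw [← gld_compl G]
    exact gld_le_ld Gᶜ
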